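/- Let {f_θ}_{θ∈Θ} be a family of functions f_θ : ℝ^d → ℝ^k, F(w,V,θ) = (1/n)·Σ_{i=1}^n ℓ(wᵀ(x_i + V f_θ(x_i)); y_i) with ℓ(·;y) twice differentiable and convex, F_θ(w,V) := F(w,V,θ), and F_lin(u) = (1/n)·Σ_{i=1}^n ℓ(uᵀx_i; y_i). Suppose that on every bounded subset of the domain, for each fixed θ, the functions F_θ, ∇F_θ and ∇²F_θ are Lipschitz continuous in (w,V) (with constants that may depend on the subset but are uniform over θ with (w,V,θ) in the subset). Then every local minimum (w,V,θ) of F satisfies F(w,V,θ) ≤ inf_{u∈ℝ^d} F_lin(u). In particular, F has no spurious local minimum with value above the infimum attainable by linear predictors. -/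

import Mathlib

open scoped RealInnerProductSpace
open Finset

noncomputable section

/-- Euclidean column vectors in `ℝ^d`. -/
abbrev Vec (d : ℕ) : Type := EuclideanSpace ℝ (Fin d)

/-- The concatenated parameter vector `(w, vec(V))`. -/
abbrev Param (d k : ℕ) : Type := EuclideanSpace ℝ (Fin d ⊕ Fin d × Fin k)

/-- The residual-network objective `F(w,V) = (1/n)·Σᵢ ℓ(wᵀ(xᵢ + V f(xᵢ)); yᵢ)`. -/
def netObj {d k n : ℕ} (ℓ : ℝ → ℝ → ℝ) (f : Vec d → Vec k)
    (x : Fin n → Vec d) (y : Fin n → ℝ) (z : Param d k) : ℝ :=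
  (1 / (n : ℝ)) *
    ∑ i, ℓ (∑ j, z (Sum.inl j) * ((x i) j + ∑ l, z (Sum.inr (j, l)) * (f (x i)) l)) (y i)

/-- The linear-predictor objective `F_lin(u) = (1/n)·Σᵢ ℓ(uᵀxᵢ; yᵢ)`. -/
def linObj {d n : ℕ} (ℓ : ℝ → ℝ → ℝ) (x : Fin n → Vec d) (y : Fin n → ℝ) (u : Vec d) : ℝ :=
  (1 / (n : ℝ)) * ∑ i, ℓ (∑ j, u j * (x i) j) (y i)

/-- Spectral norm of a matrix. -/
def matSpectralNorm {ι κ : Type} [Fintype ι] [Fintype κ] [DecidableEq κ] (V : Matrix ι κ ℝ) : ℝ :=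
  ‖LinearMap.toContinuousLinearMap (Matrix.toEuclideanLin V)‖

/-- The Hessian matrix of second partial derivatives of `F`. -/
def hessianMatrix {ι : Type} [Fintype ι] [DecidableEq ι] (F : EuclideanSpace ℝ ι → ℝ)
    (z : EuclideanSpace ℝ ι) : Matrix ι ι ℝ :=
  Matrix.of fun p q =>
    fderiv ℝ (fun v => fderiv ℝ F v (EuclideanSpace.single q 1)) z (EuclideanSpace.single p 1)

/-! ### Auxiliary machinery -/

lemma sum_expand {d k : ℕ} (A : Fin d → ℝ) (X : Fin d → ℝ) (C : Fin d → Fin k → ℝ)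
    (fl : Fin k → ℝ) :
    ∑ j, A j * (X j + ∑ l, C j l * fl l)
      = (∑ j, A j * X j) + ∑ l, (∑ j, A j * C j l) * fl l := by
  calc ∑ j, A j * (X j + ∑ l, C j l * fl l)
      = ∑ j, (A j * X j + ∑ l, A j * (C j l * fl l)) := by
        refine Finset.sum_congr rfl fun j _ => ?_
        rw [mul_add, Finset.mul_sum]
    _ = (∑ j, A j * X j) + ∑ j, ∑ l, A j * (C j l * fl l) := Finset.sum_add_distrib
    _ = (∑ j, A j * X j) + ∑ l, ∑ j, A j * (C j l * fl l) := by rw [Finset.sum_comm]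
    _ = (∑ j, A j * X j) + ∑ l, (∑ j, A j * C j l) * fl l := by
        congr 1
        refine Finset.sum_congr rfl fun l _ => ?_
        rw [Finset.sum_mul]
        exact Finset.sum_congr rfl fun j _ => by ring

lemma aux_hasDerivAt {n : ℕ} (ℓ : ℝ → ℝ → ℝ) (y : Fin n → ℝ)
    (hdiff : ∀ y₀ : ℝ, Differentiable ℝ fun p => ℓ p y₀) (c : ℝ) (co : Fin n → ℝ) :
    HasDerivAt (fun ε => c * ∑ i, ℓ (ε * co i) (y i))
      (c * ∑ i, deriv (fun p => ℓ p (y i)) 0 * co i) 0 := by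
  apply HasDerivAt.const_mul
  apply HasDerivAt.fun_sum
  intro i _
  have h1 : HasDerivAt (fun ε : ℝ => ε * co i) (co i) 0 := by
    simpa using (hasDerivAt_id (0 : ℝ)).mul_const (co i)
  have h2 : HasDerivAt (fun p => ℓ p (y i)) (deriv (fun p => ℓ p (y i)) 0) ((0 : ℝ) * co i) := by
    rw [zero_mul]
    exact ((hdiff (y i)) (0 : ℝ)).hasDerivAt
  simpa [Function.comp_def] using h2.comp 0 h1

def pathDen {d k : ℕ} (z : Param d k) (u : Vec d) (j0 : Fin d) (t : ℝ) : ℝ :=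
  (1 - t) * z (Sum.inl j0) + t * u j0

def pathNum {d k : ℕ} (z : Param d k) (u : Vec d) (j0 : Fin d) (l : Fin k) (t : ℝ) : ℝ :=
  (1 - t) * (∑ j', z (Sum.inl j') * z (Sum.inr (j', l))) -
    ∑ j' ∈ Finset.univ.erase j0, ((1 - t) * z (Sum.inl j') + t * u j') * z (Sum.inr (j', l))

def pathFun {d k : ℕ} (z : Param d k) (u : Vec d) (j0 : Fin d) (t : ℝ) :
    (Fin d ⊕ Fin d × Fin k) → ℝ :=
  Sum.elim (fun j => (1 - t) * z (Sum.inl j) + t * u j)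
    (fun jl => if jl.1 = j0 then pathNum z u j0 jl.2 t / pathDen z u j0 t
      else z (Sum.inr jl))

def pathZ {d k : ℕ} (z : Param d k) (u : Vec d) (j0 : Fin d) (t : ℝ) : Param d k :=
  (WithLp.equiv 2 ((Fin d ⊕ Fin d × Fin k) → ℝ)).symm (pathFun z u j0 t)

lemma pathZ_inl {d k : ℕ} (z : Param d k) (u : Vec d) (j0 : Fin d) (t : ℝ) (j : Fin d) :
    pathZ z u j0 t (Sum.inl j) = (1 - t) * z (Sum.inl j) + t * u j := rfl

lemma pathZ_inr {d k : ℕ} (z : Param d k) (u : Vec d) (j0 : Fin d) (t : ℝ) (j : Fin d)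
    (l : Fin k) :
    pathZ z u j0 t (Sum.inr (j, l)) =
      if j = j0 then pathNum z u j0 l t / pathDen z u j0 t else z (Sum.inr (j, l)) := rfl

lemma pathNum_zero {d k : ℕ} (z : Param d k) (u : Vec d) (j0 : Fin d) (l : Fin k) :
    pathNum z u j0 l 0 = z (Sum.inl j0) * z (Sum.inr (j0, l)) := by
  rw [pathNum]
  have h1 : ∑ j' ∈ Finset.univ.erase j0,
      ((1 - (0:ℝ)) * z (Sum.inl j') + 0 * u j') * z (Sum.inr (j', l))
      = ∑ j' ∈ Finset.univ.erase j0, z (Sum.inl j') * z (Sum.inr (j', l)) :=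
    Finset.sum_congr rfl fun j' _ => by ring
  rw [h1, ← Finset.add_sum_erase _ (fun j' => z (Sum.inl j') * z (Sum.inr (j', l)))
    (Finset.mem_univ j0)]
  ring

lemma pathZ_zero {d k : ℕ} (z : Param d k) (u : Vec d) (j0 : Fin d)
    (hj0 : z (Sum.inl j0) ≠ 0) : pathZ z u j0 0 = z := by
  ext idx
  rcases idx with j | ⟨j, l⟩
  · rw [pathZ_inl]; ring
  · rw [pathZ_inr]
    by_cases hj : j = j0
    · subst hj
      rw [if_pos rfl, pathNum_zero]
      have hden : pathDen z u j 0 = z (Sum.inl j) := by rw [pathDen]; ring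
      rw [hden, mul_div_cancel_left₀ _ hj0]
    · rw [if_neg hj]

lemma pathZ_continuousAt {d k : ℕ} (z : Param d k) (u : Vec d) (j0 : Fin d)
    (hj0 : z (Sum.inl j0) ≠ 0) : ContinuousAt (pathZ z u j0) 0 := by
  have h1 : Continuous ((WithLp.equiv 2 ((Fin d ⊕ Fin d × Fin k) → ℝ)).symm) :=
    PiLp.continuous_toLp 2 (fun _ : Fin d ⊕ Fin d × Fin k => ℝ)
  have h2 : ContinuousAt (pathFun z u j0) 0 := by
    refine continuousAt_pi.mpr fun idx => ?_
    rcases idx with j | ⟨j, l⟩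
    · simp only [pathFun, Sum.elim_inl]
      fun_prop
    · simp only [pathFun, Sum.elim_inr]
      by_cases hj : j = j0
      · simp only [hj, if_pos rfl]
        have hnum : Continuous (pathNum z u j0 l) := by
          refine Continuous.sub (by fun_prop) ?_
          exact continuous_finset_sum _ fun j' _ => by fun_prop
        have hden : Continuous (pathDen z u j0) := by unfold pathDen; fun_prop
        refine ContinuousAt.div hnum.continuousAt hden.continuousAt ?_
        rw [pathDen]
        simpa using hj0
      · simp only [if_neg hj]
        exact continuousAt_const
  exact h1.continuousAt.comp h2

lemma pathZ_inner {d k : ℕ} (z : Param d k) (u : Vec d) (j0 : Fin d) (t : ℝ)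
    (ht : pathDen z u j0 t ≠ 0) (X : Fin d → ℝ) (fl : Fin k → ℝ) :
    ∑ j, pathZ z u j0 t (Sum.inl j) * (X j + ∑ l, pathZ z u j0 t (Sum.inr (j, l)) * fl l)
      = (1 - t) * (∑ j, z (Sum.inl j) * (X j + ∑ l, z (Sum.inr (j, l)) * fl l))
        + t * ∑ j, u j * X j := by
  have hLHS : ∑ j, pathZ z u j0 t (Sum.inl j)
      * (X j + ∑ l, pathZ z u j0 t (Sum.inr (j, l)) * fl l)
      = ∑ j, ((1 - t) * z (Sum.inl j) + t * u j)
        * (X j + ∑ l, pathZ z u j0 t (Sum.inr (j, l)) * fl l) :=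
    Finset.sum_congr rfl fun j _ => by rw [pathZ_inl]
  have hexp := sum_expand (fun j => (1 - t) * z (Sum.inl j) + t * u j) X
    (fun j l => pathZ z u j0 t (Sum.inr (j, l))) fl
  have hcoef : ∀ l, (∑ j, ((1 - t) * z (Sum.inl j) + t * u j) * pathZ z u j0 t (Sum.inr (j, l)))
      = (1 - t) * ∑ j, z (Sum.inl j) * z (Sum.inr (j, l)) := by
    intro l
    rw [← Finset.add_sum_erase _ _ (Finset.mem_univ j0)]
    have h2 : ∑ j ∈ Finset.univ.erase j0,
        ((1 - t) * z (Sum.inl j) + t * u j) * pathZ z u j0 t (Sum.inr (j, l))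
        = ∑ j ∈ Finset.univ.erase j0,
          ((1 - t) * z (Sum.inl j) + t * u j) * z (Sum.inr (j, l)) := by
      refine Finset.sum_congr rfl fun j hj => ?_
      rw [pathZ_inr, if_neg (Finset.ne_of_mem_erase hj)]
    have h3 : ((1 - t) * z (Sum.inl j0) + t * u j0) * pathZ z u j0 t (Sum.inr (j0, l))
        = pathNum z u j0 l t := by
      rw [pathZ_inr, if_pos rfl]
      have : ((1 - t) * z (Sum.inl j0) + t * u j0) = pathDen z u j0 t := rfl
      rw [this, mul_div_assoc', mul_comm, mul_div_assoc, div_self ht, mul_one]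
    rw [h2, h3, pathNum]
    ring
  have hRHS := sum_expand (fun j => z (Sum.inl j)) X (fun j l => z (Sum.inr (j, l))) fl
  rw [hLHS, hexp, hRHS]
  have hx : ∑ j, ((1 - t) * z (Sum.inl j) + t * u j) * X j
      = (1 - t) * (∑ j, z (Sum.inl j) * X j) + t * ∑ j, u j * X j := by
    rw [Finset.mul_sum, Finset.mul_sum, ← Finset.sum_add_distrib]
    exact Finset.sum_congr rfl fun j _ => by ring
  have hfl : ∑ l, (∑ j, ((1 - t) * z (Sum.inl j) + t * u j) * pathZ z u j0 t (Sum.inr (j, l)))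
        * fl l
      = (1 - t) * ∑ l, (∑ j, z (Sum.inl j) * z (Sum.inr (j, l))) * fl l := by
    rw [Finset.mul_sum]
    exact Finset.sum_congr rfl fun l _ => by rw [hcoef l]; ring
  rw [hx, hfl]
  ring

theorem main_case1
    {d k n : ℕ} (ℓ : ℝ → ℝ → ℝ) (x : Fin n → Vec d) (y : Fin n → ℝ)
    (hconv : ∀ y₀ : ℝ, ConvexOn ℝ Set.univ fun p => ℓ p y₀)
    (hdiff : ∀ y₀ : ℝ, Differentiable ℝ fun p => ℓ p y₀)
    {Θ : Type*} [MetricSpace Θ] (f : Θ → Vec d → Vec k)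
    (z : Param d k) (θ : Θ)
    (hmin : IsLocalMin (fun p : Param d k × Θ => netObj ℓ (f p.2) x y p.1) (z, θ))
    (hw : ∀ j : Fin d, z (Sum.inl j) = 0) :
    ∀ u : Vec d, netObj ℓ (f θ) x y z ≤ linObj ℓ x y u := by
  classical
  intro u
  have hminev : ∀ᶠ p in nhds ((z, θ) : Param d k × Θ),
      netObj ℓ (f θ) x y z ≤ netObj ℓ (f p.2) x y p.1 := hmin
  obtain ⟨r, hr0, hr⟩ := Metric.eventually_nhds_iff.mp hminev
  set D : Fin n → ℝ := fun i => deriv (fun p => ℓ p (y i)) 0 with hD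
  have hzval : netObj ℓ (f θ) x y z = (1 / (n : ℝ)) * ∑ i, ℓ 0 (y i) := by
    simp only [netObj]
    congr 1
    refine Finset.sum_congr rfl fun i _ => ?_
    congr 1
    exact Finset.sum_eq_zero fun j _ => by rw [hw j, zero_mul]
  have hkey : ∀ (j0 : Fin d) (v : Param d k), ‖v‖ < r / 2 → (∀ j, v (Sum.inl j) = 0) →
      (1 / (n : ℝ)) * ∑ i, D i *
        (x i j0 + ∑ l, (z (Sum.inr (j0, l)) + v (Sum.inr (j0, l))) * f θ (x i) l) = 0 := by
    intro j0 v hvn hv1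
    set E1 : Param d k := EuclideanSpace.single (Sum.inl j0) (1 : ℝ) with hE1
    set co : Fin n → ℝ := fun i =>
      x i j0 + ∑ l, (z (Sum.inr (j0, l)) + v (Sum.inr (j0, l))) * f θ (x i) l with hco
    set φ : ℝ → ℝ := fun ε => netObj ℓ (f θ) x y (z + ε • E1 + v) with hφ
    have hA : ∀ (ε : ℝ) (j : Fin d), (z + ε • E1 + v) (Sum.inl j)
        = if j = j0 then ε else 0 := by
      intro ε j
      by_cases h : j = j0 <;>
        simp [hE1, h, PiLp.add_apply, PiLp.smul_apply, EuclideanSpace.single_apply,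
          hw, hv1]
    have hC : ∀ (ε : ℝ) (j : Fin d) (l : Fin k), (z + ε • E1 + v) (Sum.inr (j, l))
        = z (Sum.inr (j, l)) + v (Sum.inr (j, l)) := by
      intro ε j l
      simp [hE1, PiLp.add_apply, PiLp.smul_apply, EuclideanSpace.single_apply]
    have hφeq : ∀ ε, φ ε = (1 / (n : ℝ)) * ∑ i, ℓ (ε * co i) (y i) := by
      intro ε
      rw [hφ]
      simp only [netObj]
      congr 1
      refine Finset.sum_congr rfl fun i _ => ?_
      congr 1
      have step1 : ∑ j, (z + ε • E1 + v) (Sum.inl j)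
          * (x i j + ∑ l, (z + ε • E1 + v) (Sum.inr (j, l)) * f θ (x i) l)
          = ∑ j, (if j = j0 then ε else 0)
            * (x i j + ∑ l, (z (Sum.inr (j, l)) + v (Sum.inr (j, l))) * f θ (x i) l) := by
        refine Finset.sum_congr rfl fun j _ => ?_
        rw [hA ε j]
        congr 2
        exact Finset.sum_congr rfl fun l _ => by rw [hC ε j l]
      rw [step1, hco]
      simp [ite_mul, zero_mul]
    have hφ0 : φ 0 = netObj ℓ (f θ) x y z := by
      rw [hφeq 0, hzval]
      simp
    have hloc : IsLocalMin φ 0 := by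
      show ∀ᶠ ε in nhds (0 : ℝ), φ 0 ≤ φ ε
      refine Metric.eventually_nhds_iff.mpr ⟨r / 2, by positivity, fun ε hε => ?_⟩
      rw [hφ0]
      have hd1 : dist ((z + ε • E1 + v, θ) : Param d k × Θ) (z, θ) = ‖ε • E1 + v‖ := by
        rw [Prod.dist_eq, dist_self, dist_eq_norm,
          show z + ε • E1 + v - z = ε • E1 + v from by abel]
        exact max_eq_left (norm_nonneg _)
      have hdist : dist ((z + ε • E1 + v, θ) : Param d k × Θ) (z, θ) < r := by
        rw [hd1]
        have h2 : ‖ε • E1‖ = |ε| := by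
          rw [norm_smul, hE1, EuclideanSpace.norm_single]
          simp [Real.norm_eq_abs]
        have h3 : |ε| < r / 2 := by rwa [Real.dist_eq, sub_zero] at hε
        calc ‖ε • E1 + v‖ ≤ ‖ε • E1‖ + ‖v‖ := norm_add_le _ _
          _ < r / 2 + r / 2 := by rw [h2]; exact add_lt_add h3 hvn
          _ = r := by ring
      have := hr hdist
      rw [hφ]
      exact this
    have hlocfun : IsLocalMin (fun ε => (1 / (n : ℝ)) * ∑ i, ℓ (ε * co i) (y i)) 0 := by
      have hfe : φ = fun ε => (1 / (n : ℝ)) * ∑ i, ℓ (ε * co i) (y i) := funext hφeq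
      rwa [hfe] at hloc
    have hres := hlocfun.hasDerivAt_eq_zero (aux_hasDerivAt ℓ y hdiff (1 / (n : ℝ)) co)
    simpa [hD, hco] using hres
  have hA0 : ∀ j0 : Fin d, (1 / (n : ℝ)) * ∑ i, D i *
      (x i j0 + ∑ l, z (Sum.inr (j0, l)) * f θ (x i) l) = 0 := by
    intro j0
    have h := hkey j0 0 (by simpa using half_pos hr0) (fun j => by simp [PiLp.zero_apply])
    simpa [PiLp.zero_apply] using h
  have hC0 : ∀ j0 : Fin d, (1 / (n : ℝ)) * ∑ i, D i * x i j0 = 0 := by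
    intro j0
    have hBl : ∀ l0 : Fin k, (1 / (n : ℝ)) * ∑ i, D i * f θ (x i) l0 = 0 := by
      intro l0
      set v : Param d k := (r / 4) • EuclideanSpace.single (Sum.inr (j0, l0)) (1 : ℝ) with hv
      have hvn : ‖v‖ < r / 2 := by
        rw [hv, norm_smul, EuclideanSpace.norm_single]
        simp only [Real.norm_eq_abs, abs_of_pos (by positivity : (0:ℝ) < r / 4), norm_one,
          mul_one]
        linarith
      have hv1 : ∀ j, v (Sum.inl j) = 0 := by
        intro j
        rw [hv]
        simp [PiLp.smul_apply, EuclideanSpace.single_apply]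
      have hvc : ∀ l, v (Sum.inr (j0, l)) = if l = l0 then r / 4 else 0 := by
        intro l
        by_cases h : l = l0 <;>
          simp [hv, PiLp.smul_apply, EuclideanSpace.single_apply, h]
      have h1 := hkey j0 v hvn hv1
      have h0 := hA0 j0
      have hsum : ∑ i, D i * (x i j0 + ∑ l, (z (Sum.inr (j0, l)) + v (Sum.inr (j0, l)))
            * f θ (x i) l)
          = (∑ i, D i * (x i j0 + ∑ l, z (Sum.inr (j0, l)) * f θ (x i) l))
            + (r / 4) * ∑ i, D i * f θ (x i) l0 := by
        rw [Finset.mul_sum, ← Finset.sum_add_distrib]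
        refine Finset.sum_congr rfl fun i _ => ?_
        have hinner : ∑ l, (z (Sum.inr (j0, l)) + v (Sum.inr (j0, l))) * f θ (x i) l
            = (∑ l, z (Sum.inr (j0, l)) * f θ (x i) l) + (r / 4) * f θ (x i) l0 := by
          calc ∑ l, (z (Sum.inr (j0, l)) + v (Sum.inr (j0, l))) * f θ (x i) l
              = ∑ l, (z (Sum.inr (j0, l)) * f θ (x i) l
                  + v (Sum.inr (j0, l)) * f θ (x i) l) :=
                Finset.sum_congr rfl fun l _ => by rw [add_mul]
            _ = (∑ l, z (Sum.inr (j0, l)) * f θ (x i) l)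
                + ∑ l, v (Sum.inr (j0, l)) * f θ (x i) l := Finset.sum_add_distrib
            _ = (∑ l, z (Sum.inr (j0, l)) * f θ (x i) l) + (r / 4) * f θ (x i) l0 := by
                congr 1
                have : ∑ l, v (Sum.inr (j0, l)) * f θ (x i) l
                    = ∑ l, (if l = l0 then r / 4 else 0) * f θ (x i) l :=
                  Finset.sum_congr rfl fun l _ => by rw [hvc l]
                rw [this]
                simp [ite_mul, zero_mul]
        rw [hinner]
        ring
      rw [hsum] at h1
      have hr4 : (r / 4) * ((1 / (n : ℝ)) * ∑ i, D i * f θ (x i) l0) = 0 := by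
        linear_combination h1 - h0
      have hr4ne : (r / 4 : ℝ) ≠ 0 := by positivity
      exact (mul_eq_zero.mp hr4).resolve_left hr4ne
    have hsplit : ∑ i, D i * (x i j0 + ∑ l, z (Sum.inr (j0, l)) * f θ (x i) l)
        = ∑ i, D i * x i j0
          + ∑ l, z (Sum.inr (j0, l)) * ∑ i, D i * f θ (x i) l := by
      calc ∑ i, D i * (x i j0 + ∑ l, z (Sum.inr (j0, l)) * f θ (x i) l)
          = ∑ i, (D i * x i j0 + ∑ l, z (Sum.inr (j0, l)) * (D i * f θ (x i) l)) := by
            refine Finset.sum_congr rfl fun i _ => ?_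
            rw [mul_add, Finset.mul_sum]
            congr 1
            exact Finset.sum_congr rfl fun l _ => by ring
        _ = (∑ i, D i * x i j0)
            + ∑ i, ∑ l, z (Sum.inr (j0, l)) * (D i * f θ (x i) l) := Finset.sum_add_distrib
        _ = (∑ i, D i * x i j0)
            + ∑ l, ∑ i, z (Sum.inr (j0, l)) * (D i * f θ (x i) l) := by rw [Finset.sum_comm]
        _ = (∑ i, D i * x i j0)
            + ∑ l, z (Sum.inr (j0, l)) * ∑ i, D i * f θ (x i) l := by
            congr 1
            exact Finset.sum_congr rfl fun l _ => by rw [Finset.mul_sum]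
    have hstep : (1 / (n : ℝ)) * ∑ i, D i * x i j0
        = (1 / (n : ℝ)) * (∑ i, D i * (x i j0 + ∑ l, z (Sum.inr (j0, l)) * f θ (x i) l))
          - ∑ l, z (Sum.inr (j0, l)) * ((1 / (n : ℝ)) * ∑ i, D i * f θ (x i) l) := by
      rw [hsplit, mul_add]
      have hperm : ∑ l, (1 / (n : ℝ)) * (z (Sum.inr (j0, l)) * ∑ i, D i * f θ (x i) l)
          = ∑ l, z (Sum.inr (j0, l)) * ((1 / (n : ℝ)) * ∑ i, D i * f θ (x i) l) :=
        Finset.sum_congr rfl fun l _ => by ring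
      have hdist2 : (1 / (n : ℝ)) * ∑ l, z (Sum.inr (j0, l)) * ∑ i, D i * f θ (x i) l
          = ∑ l, z (Sum.inr (j0, l)) * ((1 / (n : ℝ)) * ∑ i, D i * f θ (x i) l) := by
        rw [Finset.mul_sum]
        exact hperm
      rw [hdist2]
      ring
    rw [hstep, hA0 j0]
    rw [zero_sub, neg_eq_zero]
    exact Finset.sum_eq_zero fun l _ => by rw [hBl l, mul_zero]
  -- convexity conclusion
  set Q : Fin n → ℝ := fun i => ∑ j, u j * x i j with hQ
  have hq0 : (1 / (n : ℝ)) * ∑ i, D i * Q i = 0 := by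
    have hswap : ∑ i, D i * Q i = ∑ j, u j * ∑ i, D i * x i j := by
      calc ∑ i, D i * Q i = ∑ i, ∑ j, u j * (D i * x i j) := by
            refine Finset.sum_congr rfl fun i _ => ?_
            rw [hQ]
            rw [Finset.mul_sum]
            exact Finset.sum_congr rfl fun j _ => by ring
        _ = ∑ j, ∑ i, u j * (D i * x i j) := Finset.sum_comm
        _ = ∑ j, u j * ∑ i, D i * x i j :=
            Finset.sum_congr rfl fun j _ => by rw [Finset.mul_sum]
    rw [hswap, Finset.mul_sum]
    refine Finset.sum_eq_zero fun j _ => ?_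
    linear_combination u j * hC0 j
  set ψ : ℝ → ℝ := fun t => (1 / (n : ℝ)) * ∑ i, ℓ (t * Q i) (y i) with hψ
  have hψd : HasDerivAt ψ 0 0 := by
    have h := aux_hasDerivAt ℓ y hdiff (1 / (n : ℝ)) Q
    have hD0 : (1 / (n : ℝ)) * ∑ i, deriv (fun p => ℓ p (y i)) 0 * Q i = 0 := by
      have h2 := hq0
      simp only [hD] at h2
      exact h2
    rw [hψ]
    rwa [hD0] at h
  have hψ0 : ψ 0 = netObj ℓ (f θ) x y z := by
    rw [hψ, hzval]
    simp
  have hψ1 : ψ 1 = linObj ℓ x y u := by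
    rw [hψ, hQ]
    simp only [linObj, one_mul]
  have hcvx : ∀ t ∈ Set.Ioo (0:ℝ) 1, ψ t ≤ (1 - t) * ψ 0 + t * ψ 1 := by
    intro t ht
    rw [hψ]
    have hi : ∀ i ∈ (Finset.univ : Finset (Fin n)),
        ℓ (t * Q i) (y i) ≤ (1 - t) * ℓ (0 * Q i) (y i) + t * ℓ (1 * Q i) (y i) := by
      intro i _
      have h := (hconv (y i)).2 (Set.mem_univ (0 * Q i)) (Set.mem_univ (1 * Q i))
        (by linarith [ht.2] : (0:ℝ) ≤ 1 - t) (le_of_lt ht.1) (by ring)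
      have harg : (1 - t) • (0 * Q i) + t • (1 * Q i) = t * Q i := by
        rw [smul_eq_mul, smul_eq_mul]; ring
      rw [harg] at h
      simpa [smul_eq_mul] using h
    calc (1 / (n : ℝ)) * ∑ i, ℓ (t * Q i) (y i)
        ≤ (1 / (n : ℝ)) * ∑ i, ((1 - t) * ℓ (0 * Q i) (y i) + t * ℓ (1 * Q i) (y i)) :=
          mul_le_mul_of_nonneg_left (Finset.sum_le_sum hi) (by positivity)
      _ = (1 - t) * ((1 / (n : ℝ)) * ∑ i, ℓ (0 * Q i) (y i))
          + t * ((1 / (n : ℝ)) * ∑ i, ℓ (1 * Q i) (y i)) := by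
          rw [Finset.sum_add_distrib, ← Finset.mul_sum, ← Finset.mul_sum]
          ring
  have hub : ∀ᶠ t in nhdsWithin (0:ℝ) (Set.Ioi 0), slope ψ 0 t ≤ ψ 1 - ψ 0 := by
    filter_upwards [Ioo_mem_nhdsGT_of_mem (⟨le_refl (0:ℝ), zero_lt_one⟩ :
      (0:ℝ) ∈ Set.Ico (0:ℝ) 1)] with t ht
    have h2 := hcvx t ht
    rw [slope_def_field, sub_zero, div_le_iff₀ ht.1]
    nlinarith [h2, ht.1]
  have hlim : Filter.Tendsto (slope ψ 0) (nhdsWithin (0:ℝ) (Set.Ioi 0)) (nhds 0) := by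
    have h := hasDerivAt_iff_tendsto_slope.mp hψd
    exact h.mono_left (nhdsWithin_mono 0 fun a ha => ne_of_gt ha)
  have hfin : (0:ℝ) ≤ ψ 1 - ψ 0 := le_of_tendsto hlim hub
  rw [← hψ0, ← hψ1]
  linarith

theorem main_case2
    {d k n : ℕ} (ℓ : ℝ → ℝ → ℝ) (x : Fin n → Vec d) (y : Fin n → ℝ)
    (hconv : ∀ y₀ : ℝ, ConvexOn ℝ Set.univ fun p => ℓ p y₀)
    {Θ : Type*} [MetricSpace Θ] (f : Θ → Vec d → Vec k)
    (z : Param d k) (θ : Θ)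
    (hmin : IsLocalMin (fun p : Param d k × Θ => netObj ℓ (f p.2) x y p.1) (z, θ))
    (j0 : Fin d) (hj0 : z (Sum.inl j0) ≠ 0) :
    ∀ u : Vec d, netObj ℓ (f θ) x y z ≤ linObj ℓ x y u := by
  classical
  intro u
  have hminev : ∀ᶠ p in nhds ((z, θ) : Param d k × Θ),
      netObj ℓ (f θ) x y z ≤ netObj ℓ (f p.2) x y p.1 := hmin
  set P : Fin n → ℝ :=
    fun i => ∑ j, z (Sum.inl j) * (x i j + ∑ l, z (Sum.inr (j, l)) * f θ (x i) l) with hP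
  set Q : Fin n → ℝ := fun i => ∑ j, u j * x i j with hQ
  set g : ℝ → ℝ := fun t => (1 / (n : ℝ)) * ∑ i, ℓ ((1 - t) * P i + t * Q i) (y i) with hg
  have hg0 : g 0 = netObj ℓ (f θ) x y z := by
    rw [hg, hP]
    simp only [netObj]
    norm_num
  have hg1 : g 1 = linObj ℓ x y u := by
    rw [hg, hQ]
    simp only [linObj]
    norm_num
  have hcvx : ∀ t ∈ Set.Ioo (0:ℝ) 1, g t ≤ (1 - t) * g 0 + t * g 1 := by
    intro t ht
    rw [hg]
    have hi : ∀ i ∈ (Finset.univ : Finset (Fin n)),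
        ℓ ((1 - t) * P i + t * Q i) (y i)
          ≤ (1 - t) * ℓ ((1 - (0:ℝ)) * P i + 0 * Q i) (y i)
            + t * ℓ ((1 - (1:ℝ)) * P i + 1 * Q i) (y i) := by
      intro i _
      have h := (hconv (y i)).2 (Set.mem_univ (P i)) (Set.mem_univ (Q i))
        (by linarith [ht.2] : (0:ℝ) ≤ 1 - t) (le_of_lt ht.1) (by ring)
      have harg : (1 - t) • P i + t • Q i = (1 - t) * P i + t * Q i := by
        rw [smul_eq_mul, smul_eq_mul]
      rw [harg] at h
      have harg0 : (1 - (0:ℝ)) * P i + 0 * Q i = P i := by ring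
      have harg1 : (1 - (1:ℝ)) * P i + 1 * Q i = Q i := by ring
      rw [harg0, harg1]
      simpa [smul_eq_mul] using h
    calc (1 / (n : ℝ)) * ∑ i, ℓ ((1 - t) * P i + t * Q i) (y i)
        ≤ (1 / (n : ℝ)) * ∑ i, ((1 - t) * ℓ ((1 - (0:ℝ)) * P i + 0 * Q i) (y i)
            + t * ℓ ((1 - (1:ℝ)) * P i + 1 * Q i) (y i)) :=
          mul_le_mul_of_nonneg_left (Finset.sum_le_sum hi) (by positivity)
      _ = (1 - t) * ((1 / (n : ℝ)) * ∑ i, ℓ ((1 - (0:ℝ)) * P i + 0 * Q i) (y i))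
          + t * ((1 / (n : ℝ)) * ∑ i, ℓ ((1 - (1:ℝ)) * P i + 1 * Q i) (y i)) := by
          rw [Finset.sum_add_distrib, ← Finset.mul_sum, ← Finset.mul_sum]
          ring
  have htd : Filter.Tendsto (fun t => ((pathZ z u j0 t, θ) : Param d k × Θ))
      (nhds 0) (nhds (z, θ)) := by
    have hc := pathZ_continuousAt z u j0 hj0
    rw [ContinuousAt, pathZ_zero z u j0 hj0] at hc
    exact hc.prodMk_nhds tendsto_const_nhds
  have hev1 : ∀ᶠ t in nhds (0:ℝ),
      netObj ℓ (f θ) x y z ≤ netObj ℓ (f θ) x y (pathZ z u j0 t) := htd.eventually hminev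
  have hev2 : ∀ᶠ t in nhds (0:ℝ), pathDen z u j0 t ≠ 0 := by
    have hcd : ContinuousAt (pathDen z u j0) 0 := by unfold pathDen; fun_prop
    have h0 : pathDen z u j0 0 = z (Sum.inl j0) := by rw [pathDen]; ring
    rw [ContinuousAt, h0] at hcd
    exact hcd.eventually_ne hj0
  have hgt : ∀ᶠ t in nhds (0:ℝ), g 0 ≤ g t := by
    filter_upwards [hev1, hev2] with t h1 h2
    have heq : netObj ℓ (f θ) x y (pathZ z u j0 t) = g t := by
      rw [hg]
      simp only [netObj]
      congr 1
      refine Finset.sum_congr rfl fun i _ => ?_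
      congr 1
      have hin := pathZ_inner z u j0 t h2 (fun j => x i j) (fun l => f θ (x i) l)
      rw [hin, hP, hQ]
    rw [hg0, ← heq]
    exact h1
  obtain ⟨ε, hε, hball⟩ := Metric.eventually_nhds_iff.mp hgt
  set t0 : ℝ := min (ε / 2) (1 / 2) with ht0
  have ht0pos : 0 < t0 := lt_min (by positivity) (by norm_num)
  have ht0lt1 : t0 < 1 := lt_of_le_of_lt (min_le_right _ _) (by norm_num)
  have ht0dist : dist t0 0 < ε := by
    rw [Real.dist_eq, sub_zero, abs_of_pos ht0pos]
    exact lt_of_le_of_lt (min_le_left _ _) (by linarith)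
  have h1 := hball ht0dist
  have h2 := hcvx t0 ⟨ht0pos, ht0lt1⟩
  rw [hg0] at h1 h2
  rw [hg1] at h2
  have h3 : netObj ℓ (f θ) x y z ≤ (1 - t0) * netObj ℓ (f θ) x y z + t0 * linObj ℓ x y u :=
    h1.trans h2
  have h4 : (1 - t0) * netObj ℓ (f θ) x y z + t0 * linObj ℓ x y u
      = netObj ℓ (f θ) x y z - t0 * netObj ℓ (f θ) x y z + t0 * linObj ℓ x y u := by ring
  rw [h4] at h3
  have h5 : t0 * netObj ℓ (f θ) x y z ≤ t0 * linObj ℓ x y u := by linarith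
  exact le_of_mul_le_mul_left h5 ht0pos

/-- Corollary 1 of the paper: every local minimum of `F` is at least as
good as every linear predictor. -/
theorem local_min_le_linear
    {d k n : ℕ} (ℓ : ℝ → ℝ → ℝ) (x : Fin n → Vec d) (y : Fin n → ℝ)
    (hconv : ∀ y₀ : ℝ, ConvexOn ℝ Set.univ fun p => ℓ p y₀)
    (hdiff : ∀ y₀ : ℝ, Differentiable ℝ fun p => ℓ p y₀)
    (hdiff2 : ∀ y₀ : ℝ, Differentiable ℝ (deriv fun p => ℓ p y₀))
    {Θ : Type*} [MetricSpace Θ] (f : Θ → Vec d → Vec k)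
    (hlip : ∀ S : Set (Param d k × Θ), Bornology.IsBounded S →
      ∃ μ₀ μ₁ μ₂ : ℝ, ∀ θ z z', (z, θ) ∈ S → (z', θ) ∈ S →
        |netObj ℓ (f θ) x y z - netObj ℓ (f θ) x y z'| ≤ μ₀ * ‖z - z'‖ ∧
        ‖gradient (netObj ℓ (f θ) x y) z - gradient (netObj ℓ (f θ) x y) z'‖ ≤ μ₁ * ‖z - z'‖ ∧
        matSpectralNorm (hessianMatrix (netObj ℓ (f θ) x y) z -
            hessianMatrix (netObj ℓ (f θ) x y) z') ≤ μ₂ * ‖z - z'‖)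
    (z : Param d k) (θ : Θ)
    (hmin : IsLocalMin (fun p : Param d k × Θ => netObj ℓ (f p.2) x y p.1) (z, θ)) :
    ∀ u : Vec d, netObj ℓ (f θ) x y z ≤ linObj ℓ x y u := by
  by_cases hw : ∀ j : Fin d, z (Sum.inl j) = 0
  · exact main_case1 ℓ x y hconv hdiff f z θ hmin hw
  · push_neg at hw
    obtain ⟨j0, hj0⟩ := hw
    exact main_case2 ℓ x y hconv f z θ hmin j0 hj0

end
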